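/- Let H be a 3-uniform hypergraph on vertex set [n] with matching number at most s. Define B as the set of vertices of H with degree at most 3sn. Then the number of edges of H entirely contained in B is at most 9s²n. -/
import Mathlib


open Finset

/-- Degree of a vertex in a 3-graph. -/
def degH {n : ℕ} (H : Finset (Finset (Fin n))) (v : Fin n) : ℕ :=
  (H.filter (fun e => v ∈ e)).card

/-- `H` is a 3-uniform hypergraph. -/
def Uniform3 {n : ℕ} (H : Finset (Finset (Fin n))) : Prop :=
  ∀ e ∈ H, e.card = 3

/-- The matching number of `H` is at most `s`. -/
def MatchingAtMost {n : ℕ} (H : Finset (Finset (Fin n))) (s : ℕ) : Prop :=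
  ∀ M ⊆ H, (M : Set (Finset (Fin n))).Pairwise (fun e f => Disjoint e f) → M.card ≤ s

/-- `H` contains a copy of the hypergraph with edge set `F`. -/
def HasCopy {α : Type*} [DecidableEq α] {n : ℕ}
    (F : Set (Finset α)) (H : Finset (Finset (Fin n))) : Prop :=
  ∃ f : α → Fin n, Function.Injective f ∧ ∀ e ∈ F, e.image f ∈ H

/-- Number of edges of the Turán graph `T(n, r)`. -/
def turanEdges (n r : ℕ) : ℕ := (SimpleGraph.turanGraph n r).edgeFinset.card

theorem stmt_0 {n s : ℕ} (H : Finset (Finset (Fin n)))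
    (hU : Uniform3 H) (hM : MatchingAtMost H s) :
    (H.filter (fun e => e ⊆ Finset.univ.filter (fun v => degH H v ≤ 3 * s * n))).card
      ≤ 9 * s ^ 2 * n := by
  classical
  set B := Finset.univ.filter (fun v => degH H v ≤ 3 * s * n) with hB
  set H' := H.filter (fun e => e ⊆ B) with hH'
  have hH'H : H' ⊆ H := filter_subset _ _
  -- take a maximum matching inside H'
  obtain ⟨M, hMmem, hMmax⟩ :=
    Finset.exists_max_image
      (H'.powerset.filter
        (fun M : Finset (Finset (Fin n)) => (↑M : Set (Finset (Fin n))).Pairwise (fun e f => Disjoint e f)))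
      (fun M => M.card) ⟨∅, by simp⟩
  rw [mem_filter, mem_powerset] at hMmem
  obtain ⟨hMH', hMpw⟩ := hMmem
  have hMcard : M.card ≤ s := hM M (hMH'.trans hH'H) hMpw
  set V := M.biUnion id with hV
  have hVcard : V.card ≤ 3 * s := by
    calc V.card ≤ ∑ e ∈ M, (id e).card := card_biUnion_le
    _ = ∑ e ∈ M, 3 := by
        apply Finset.sum_congr rfl
        intro e he
        exact hU e (hH'H (hMH' he))
    _ = 3 * M.card := by rw [Finset.sum_const, smul_eq_mul, mul_comm]
    _ ≤ 3 * s := by omega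
  have hVB : ∀ v ∈ V, degH H v ≤ 3 * s * n := by
    intro v hv
    rw [hV, mem_biUnion] at hv
    obtain ⟨e, he, hve⟩ := hv
    have := hMH' he
    rw [hH', mem_filter] at this
    have := this.2 hve
    rw [hB, mem_filter] at this
    exact this.2
  -- every edge of H' meets V
  have hmeet : ∀ e ∈ H', ∃ v ∈ V, v ∈ e := by
    intro e he
    by_contra h
    push_neg at h
    have hdisj : ∀ f ∈ M, Disjoint e f := by
      intro f hf
      rw [Finset.disjoint_left]
      intro v hv hvf
      exact h v (mem_biUnion.2 ⟨f, hf, hvf⟩) hv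
    have heM : e ∉ M := by
      intro heM
      have h3 : e.card = 3 := hU e (hH'H he)
      have hpos : 0 < e.card := by omega
      obtain ⟨v, hv⟩ := Finset.card_pos.1 hpos
      exact h v (mem_biUnion.2 ⟨e, heM, hv⟩) hv
    have : (insert e M).card ≤ M.card := by
      apply hMmax
      rw [mem_filter, mem_powerset]
      constructor
      · exact insert_subset he hMH'
      · rw [coe_insert]
        refine Set.pairwise_insert.2 ⟨hMpw, ?_⟩
        intro f hf _
        exact ⟨hdisj f hf, (hdisj f hf).symm⟩
    rw [Finset.card_insert_of_notMem heM] at this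
    omega
  have hsub : H' ⊆ V.biUnion (fun v => H.filter (fun e => v ∈ e)) := by
    intro e he
    obtain ⟨v, hv, hve⟩ := hmeet e he
    exact mem_biUnion.2 ⟨v, hv, mem_filter.2 ⟨hH'H he, hve⟩⟩
  calc H'.card ≤ (V.biUnion (fun v => H.filter (fun e => v ∈ e))).card := card_le_card hsub
    _ ≤ ∑ v ∈ V, (H.filter (fun e => v ∈ e)).card := card_biUnion_le
    _ ≤ ∑ v ∈ V, 3 * s * n := Finset.sum_le_sum (fun v hv => hVB v hv)
    _ = V.card * (3 * s * n) := by rw [Finset.sum_const, smul_eq_mul]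
    _ ≤ 3 * s * (3 * s * n) := Nat.mul_le_mul_right _ hVcard
    _ = 9 * s ^ 2 * n := by ring
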